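/- Let κ = 4 and h(θ) = 2θ. Then the second variation δ²E[h](g) = ∫₀^π [g'(θ)²·sin θ + (cos(4θ)/sin²θ + 4·cos(2θ))·g(θ)²·sin θ] dθ satisfies δ²E[h](g₁) < 0 for g₁(θ) = sin θ and δ²E[h](g₂) > 0 for g₂(θ) = sin(2θ). In particular, the critical profile h(θ) = 2θ at κ = 4 is neither a local minimizer nor a local maximizer of the reduced energy. -/

import Mathlib

open Real Set

lemma id1 (θ : ℝ) :
    Real.cos θ ^ 2 * Real.sin θ + Real.cos (4*θ) * Real.sin θ
      + 4 * Real.cos (2*θ) * Real.sin θ ^ 3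
    = -(7/4) * Real.sin θ + 5/4 * Real.sin (3*θ) := by
  rw [show (4:ℝ)*θ = 2*(2*θ) by ring, Real.cos_two_mul (2*θ), Real.cos_two_mul θ,
    Real.sin_three_mul]
  linear_combination (Real.sin θ * (8*Real.cos θ^2+1)) * Real.sin_sq_add_cos_sq θ

lemma id2 (θ : ℝ) :
    (2*Real.cos (2*θ))^2 * Real.sin θ
      + 4 * Real.cos (4*θ) * Real.cos θ^2 * Real.sin θ
      + 4 * Real.cos (2*θ) * Real.sin (2*θ)^2 * Real.sin θ
    = Real.sin θ - Real.sin (3*θ) + 2 * Real.sin (5*θ) := by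
  rw [show (5:ℝ)*θ = 2*θ + 3*θ by ring, Real.sin_add,
    show (4:ℝ)*θ = 2*(2*θ) by ring, Real.cos_two_mul (2*θ), Real.cos_two_mul θ,
    Real.sin_two_mul, Real.sin_three_mul, Real.cos_three_mul]
  linear_combination (32*Real.sin θ*Real.cos θ^4 - 12*Real.sin θ) * Real.sin_sq_add_cos_sq θ

lemma eq1 (θ : ℝ) :
    Real.cos θ ^ 2 * Real.sin θ
      + (Real.cos (4*θ)/Real.sin θ^2 + 4*Real.cos (2*θ)) * Real.sin θ ^2 * Real.sin θ
    = -(7/4) * Real.sin θ + 5/4 * Real.sin (3*θ) := by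
  rcases eq_or_ne (Real.sin θ) 0 with hs | hs
  · rw [Real.sin_three_mul, hs]; ring
  · rw [← id1 θ]; field_simp; ring

lemma eq2 (θ : ℝ) :
    (2*Real.cos (2*θ))^2 * Real.sin θ
      + (Real.cos (4*θ)/Real.sin θ^2 + 4*Real.cos (2*θ)) * Real.sin (2*θ) ^2 * Real.sin θ
    = Real.sin θ - Real.sin (3*θ) + 2 * Real.sin (5*θ) := by
  rcases eq_or_ne (Real.sin θ) 0 with hs | hs
  · rw [show (5:ℝ)*θ = 2*θ + 3*θ by ring, Real.sin_add, Real.sin_two_mul,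
      Real.sin_three_mul, hs]; ring
  · rw [← id2 θ, Real.sin_two_mul]; field_simp; ring

lemma int1 : (∫ θ in (0:ℝ)..π, (-(7/4) * Real.sin θ + 5/4 * Real.sin (3*θ))) = -(8/3) := by
  have hder : ∀ x ∈ Set.uIcc (0:ℝ) π,
      HasDerivAt (fun θ => 7/4*Real.cos θ - 5/12*Real.cos (3*θ))
        (-(7/4) * Real.sin x + 5/4 * Real.sin (3*x)) x := by
    intro x _
    have h1 : HasDerivAt (fun θ : ℝ => Real.cos (3*θ)) (-Real.sin (3*x) * 3) x := by
      simpa [Function.comp_def] using (Real.hasDerivAt_cos (3*x)).comp x ((hasDerivAt_id x).const_mul 3)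
    have := ((Real.hasDerivAt_cos x).const_mul (7/4:ℝ)).sub (h1.const_mul (5/12:ℝ))
    exact this.congr_deriv (by ring)
  rw [intervalIntegral.integral_eq_sub_of_hasDerivAt hder
    ((Continuous.intervalIntegrable (by continuity) 0 π))]
  have h3 : Real.cos (3*π) = -1 := by
    rw [show (3:ℝ)*π = π + 2*π by ring, Real.cos_add_two_pi, Real.cos_pi]
  norm_num [h3, Real.cos_pi]

lemma int2 : (∫ θ in (0:ℝ)..π, (Real.sin θ - Real.sin (3*θ) + 2 * Real.sin (5*θ))) = 32/15 := by
  have hder : ∀ x ∈ Set.uIcc (0:ℝ) π,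
      HasDerivAt (fun θ => -Real.cos θ + 1/3*Real.cos (3*θ) - 2/5*Real.cos (5*θ))
        (Real.sin x - Real.sin (3*x) + 2 * Real.sin (5*x)) x := by
    intro x _
    have h3 : HasDerivAt (fun θ : ℝ => Real.cos (3*θ)) (-Real.sin (3*x) * 3) x := by
      simpa [Function.comp_def] using (Real.hasDerivAt_cos (3*x)).comp x ((hasDerivAt_id x).const_mul 3)
    have h5 : HasDerivAt (fun θ : ℝ => Real.cos (5*θ)) (-Real.sin (5*x) * 5) x := by
      simpa [Function.comp_def] using (Real.hasDerivAt_cos (5*x)).comp x ((hasDerivAt_id x).const_mul 5)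
    have := ((Real.hasDerivAt_cos x).neg.add (h3.const_mul (1/3:ℝ))).sub (h5.const_mul (2/5:ℝ))
    exact this.congr_deriv (by ring)
  rw [intervalIntegral.integral_eq_sub_of_hasDerivAt hder
    ((Continuous.intervalIntegrable (by continuity) 0 π))]
  have h3 : Real.cos (3*π) = -1 := by
    rw [show (3:ℝ)*π = π + 2*π by ring, Real.cos_add_two_pi, Real.cos_pi]
  have h5 : Real.cos (5*π) = -1 := by
    rw [show (5:ℝ)*π = π + 2*π + 2*π by ring, Real.cos_add_two_pi, Real.cos_add_two_pi,
      Real.cos_pi]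
  norm_num [h3, h5, Real.cos_pi]

/-- At κ = 4 the explicit critical profile h(θ) = 2θ has second variation that
    is negative in direction g₁ = sin and positive in direction g₂ = sin 2θ;
    hence it is a saddle point of the reduced energy. -/
theorem kappa_four_saddle_point
    (h g₁ g₂ : ℝ → ℝ) (hh : h = fun θ => 2 * θ)
    (hg₁ : g₁ = fun θ => Real.sin θ) (hg₂ : g₂ = fun θ => Real.sin (2 * θ)) :
    (∫ θ in (0 : ℝ)..π,
        (deriv g₁ θ) ^ 2 * Real.sin θ
        + (Real.cos (4 * θ) / Real.sin θ ^ 2 + 4 * Real.cos (2 * θ))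
          * (g₁ θ) ^ 2 * Real.sin θ) < 0 ∧
    0 < (∫ θ in (0 : ℝ)..π,
        (deriv g₂ θ) ^ 2 * Real.sin θ
        + (Real.cos (4 * θ) / Real.sin θ ^ 2 + 4 * Real.cos (2 * θ))
          * (g₂ θ) ^ 2 * Real.sin θ) := by
  subst hh hg₁ hg₂
  have hd1 : ∀ θ : ℝ, deriv (fun θ => Real.sin θ) θ = Real.cos θ := by
    simp [Real.deriv_sin]
  have hd2 : ∀ θ : ℝ, deriv (fun θ => Real.sin (2*θ)) θ = 2 * Real.cos (2*θ) := by
    intro θ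
    have : HasDerivAt (fun θ : ℝ => Real.sin (2*θ)) (Real.cos (2*θ) * 2) θ := by
      simpa [Function.comp_def] using (Real.hasDerivAt_sin (2*θ)).comp θ ((hasDerivAt_id θ).const_mul 2)
    rw [this.deriv]; ring
  have e1 : (∫ θ in (0:ℝ)..π,
        (deriv (fun θ => Real.sin θ) θ) ^ 2 * Real.sin θ
        + (Real.cos (4 * θ) / Real.sin θ ^ 2 + 4 * Real.cos (2 * θ))
          * ((fun θ => Real.sin θ) θ) ^ 2 * Real.sin θ)
      = ∫ θ in (0:ℝ)..π, (-(7/4) * Real.sin θ + 5/4 * Real.sin (3*θ)) := by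
    apply intervalIntegral.integral_congr
    intro θ _
    simp only [hd1]
    exact eq1 θ
  have e2 : (∫ θ in (0:ℝ)..π,
        (deriv (fun θ => Real.sin (2*θ)) θ) ^ 2 * Real.sin θ
        + (Real.cos (4 * θ) / Real.sin θ ^ 2 + 4 * Real.cos (2 * θ))
          * ((fun θ => Real.sin (2*θ)) θ) ^ 2 * Real.sin θ)
      = ∫ θ in (0:ℝ)..π, (Real.sin θ - Real.sin (3*θ) + 2 * Real.sin (5*θ)) := by
    apply intervalIntegral.integral_congr
    intro θ _
    simp only [hd2]
    exact eq2 θ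
  constructor
  · rw [e1, int1]; norm_num
  · rw [e2, int2]; norm_num
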